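/- With ψ, u, u_ψ, l as above, suppose ψ^u is injective, ψ^u(k[x_1,...,x_n]) is not contained in k[x_1,...,x_l], and S ⊂ k[x_1,...,x_n]∖{0} is a set with trdeg_k k[S] = n. Then there exists g ∈ S such that for every nonzero f ∈ ψ^{-1}(k[x_1,...,x_l]), the initial form f^{u_ψ} is not divisible by g. -/

import Mathlib

open MvPolynomial

/-- The `w`-weight `a·w` of an exponent vector `a`. -/
def mwt {n : ℕ} {Γ : Type*} [AddCommGroup Γ] (w : Fin n → Γ) (a : Fin n →₀ ℕ) : Γ :=
  a.sum fun i e => e • w i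

/-- The `w`-degree of a polynomial, with `deg_w 0 = ⊥`. -/
noncomputable def wdeg {k : Type*} [CommRing k] {n : ℕ} {Γ : Type*}
    [AddCommGroup Γ] [LinearOrder Γ] [IsOrderedAddMonoid Γ] (w : Fin n → Γ) (f : MvPolynomial (Fin n) k) : WithBot Γ :=
  f.support.sup fun a => ((mwt w a : Γ) : WithBot Γ)

/-- The `w`-initial form of a polynomial (`0` for the zero polynomial). -/
noncomputable def initForm {k : Type*} [CommRing k] {n : ℕ} {Γ : Type*}
    [AddCommGroup Γ] [LinearOrder Γ] [IsOrderedAddMonoid Γ] (w : Fin n → Γ) (f : MvPolynomial (Fin n) k) :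
    MvPolynomial (Fin n) k :=
  ∑ a ∈ f.support.filter (fun a => ((mwt w a : Γ) : WithBot Γ) = wdeg w f),
    monomial a (f.coeff a)

section General

variable {k : Type*} [CommRing k] {N : ℕ} {Γ : Type*} [AddCommGroup Γ] [LinearOrder Γ] [IsOrderedAddMonoid Γ]
  (w : Fin N → Γ)

theorem mwt_add (a b : Fin N →₀ ℕ) : mwt w (a + b) = mwt w a + mwt w b := by
  classical
  unfold mwt
  rw [Finsupp.sum_add_index' (fun i => by simp) (fun i e e' => add_smul e e' (w i))]

theorem mwt_zero : mwt w 0 = 0 := by simp [mwt]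

variable {w}

theorem le_wdeg {f : MvPolynomial (Fin N) k} {a : Fin N →₀ ℕ} (h : a ∈ f.support) :
    ((mwt w a : Γ) : WithBot Γ) ≤ wdeg w f := Finset.le_sup (f := fun a => ((mwt w a : Γ) : WithBot Γ)) h

theorem wdeg_eq_bot_iff {f : MvPolynomial (Fin N) k} : wdeg w f = ⊥ ↔ f = 0 := by
  constructor
  · intro h
    by_contra hf
    obtain ⟨a, ha⟩ := Finset.nonempty_iff_ne_empty.2 (fun hs => hf (support_eq_empty.1 hs))
    have := le_wdeg (w := w) ha
    rw [h, le_bot_iff] at this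
    exact WithBot.coe_ne_bot this
  · intro h; simp [wdeg, h]

theorem wdeg_le_of_support_subset {f g : MvPolynomial (Fin N) k}
    (h : f.support ⊆ g.support) : wdeg w f ≤ wdeg w g :=
  Finset.sup_mono h

theorem exists_wdeg_eq {f : MvPolynomial (Fin N) k} (hf : f ≠ 0) :
    ∃ d : Γ, wdeg w f = (d : WithBot Γ) := by
  obtain ⟨a, ha, he⟩ := Finset.exists_mem_eq_sup f.support
    (Finset.nonempty_iff_ne_empty.2 (fun hs => hf (support_eq_empty.1 hs)))
    (fun a => ((mwt w a : Γ) : WithBot Γ))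
  exact ⟨mwt w a, he.symm ▸ rfl⟩

theorem coeff_initForm (f : MvPolynomial (Fin N) k) (a : Fin N →₀ ℕ) :
    coeff a (initForm w f) =
      if ((mwt w a : Γ) : WithBot Γ) = wdeg w f then coeff a f else 0 := by
  classical
  unfold initForm
  rw [coeff_sum]
  simp only [coeff_monomial]
  rw [Finset.sum_ite_eq' (f.support.filter fun b => ((mwt w b : Γ) : WithBot Γ) = wdeg w f) a
    (fun b => coeff b f)]
  by_cases hm : ((mwt w a : Γ) : WithBot Γ) = wdeg w f
  · by_cases hs : a ∈ f.support
    · simp [Finset.mem_filter, hs, hm]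
    · simp only [Finset.mem_filter, hs, false_and, if_false, if_pos hm]
      simpa using (notMem_support_iff.1 hs).symm
  · simp [Finset.mem_filter, hm]

theorem support_initForm_subset (f : MvPolynomial (Fin N) k) :
    (initForm w f).support ⊆ f.support := by
  intro a ha
  rw [mem_support_iff, coeff_initForm] at ha
  rw [mem_support_iff]
  intro h
  exact ha (by split <;> simp [h])

theorem initForm_ne_zero {f : MvPolynomial (Fin N) k} (hf : f ≠ 0) :
    initForm w f ≠ 0 := by
  obtain ⟨a, ha, he⟩ := Finset.exists_mem_eq_sup f.support
    (Finset.nonempty_iff_ne_empty.2 (fun hs => hf (support_eq_empty.1 hs)))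
    (fun a => ((mwt w a : Γ) : WithBot Γ))
  intro h0
  have : coeff a (initForm w f) = coeff a f := by
    rw [coeff_initForm, if_pos]
    exact he.symm
  rw [h0, coeff_zero] at this
  exact (mem_support_iff.1 ha) this.symm

theorem wdeg_lt_iff {f : MvPolynomial (Fin N) k} {d : WithBot Γ} (hd : ⊥ < d) :
    wdeg w f < d ↔ ∀ a ∈ f.support, ((mwt w a : Γ) : WithBot Γ) < d := by
  exact Finset.sup_lt_iff hd

theorem wdeg_sub_initForm_lt {f : MvPolynomial (Fin N) k} (hf : f ≠ 0) :
    wdeg w (f - initForm w f) < wdeg w f := by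
  rw [wdeg_lt_iff (by rw [bot_lt_iff_ne_bot, Ne, wdeg_eq_bot_iff]; exact hf)]
  intro a ha
  rw [mem_support_iff, coeff_sub, coeff_initForm] at ha
  have hne : ¬ ((mwt w a : Γ) : WithBot Γ) = wdeg w f := by
    intro h; rw [if_pos h, sub_self] at ha; exact ha rfl
  have hmem : a ∈ f.support := by
    rw [if_neg hne, sub_zero] at ha; exact mem_support_iff.2 ha
  exact lt_of_le_of_ne (le_wdeg hmem) hne

/-- `f` is `w`-homogeneous of degree `d` (allowing `f = 0`). -/
def IsW (w : Fin N → Γ) (d : Γ) (f : MvPolynomial (Fin N) k) : Prop :=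
  ∀ a ∈ f.support, mwt w a = d

theorem IsW.wdeg_le {d : Γ} {f : MvPolynomial (Fin N) k} (h : IsW w d f) :
    wdeg w f ≤ (d : WithBot Γ) :=
  Finset.sup_le fun a ha => by rw [h a ha]

theorem IsW_initForm {f : MvPolynomial (Fin N) k} {d : Γ}
    (hd : wdeg w f = (d : WithBot Γ)) : IsW w d (initForm w f) := by
  intro a ha
  rw [mem_support_iff, coeff_initForm] at ha
  by_cases h : ((mwt w a : Γ) : WithBot Γ) = wdeg w f
  · rw [hd] at h; exact_mod_cast h
  · rw [if_neg h] at ha; exact absurd rfl ha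

theorem IsW.mul {d e : Γ} {f g : MvPolynomial (Fin N) k} (hf : IsW w d f) (hg : IsW w e g) :
    IsW w (d + e) (f * g) := by
  classical
  intro c hc
  obtain ⟨a, ha, b, hb, rfl⟩ := Finset.mem_add.1 (MvPolynomial.support_mul f g hc)
  rw [mwt_add, hf a ha, hg b hb]

theorem wdeg_add_le (f g : MvPolynomial (Fin N) k) :
    wdeg w (f + g) ≤ wdeg w f ⊔ wdeg w g := by
  refine Finset.sup_le fun a ha => ?_
  rcases Finset.mem_union.1 (MvPolynomial.support_add ha) with h | h
  · exact le_sup_of_le_left (le_wdeg h)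
  · exact le_sup_of_le_right (le_wdeg h)

theorem wdeg_mul_le (f g : MvPolynomial (Fin N) k) :
    wdeg w (f * g) ≤ wdeg w f + wdeg w g := by
  classical
  refine Finset.sup_le fun c hc => ?_
  obtain ⟨a, ha, b, hb, rfl⟩ := Finset.mem_add.1 (MvPolynomial.support_mul f g hc)
  rw [mwt_add, WithBot.coe_add]
  exact add_le_add (le_wdeg ha) (le_wdeg hb)

theorem wb_add_lt_of_lt_of_le {a b : WithBot Γ} {d e : Γ}
    (h : a < (d : WithBot Γ)) (h' : b ≤ (e : WithBot Γ)) :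
    a + b < ((d + e : Γ) : WithBot Γ) := by
  cases a with
  | bot => rw [WithBot.bot_add]; exact bot_lt_iff_ne_bot.2 (WithBot.coe_ne_bot)
  | coe a' =>
    cases b with
    | bot => rw [WithBot.add_bot]; exact bot_lt_iff_ne_bot.2 (WithBot.coe_ne_bot)
    | coe b' =>
      rw [← WithBot.coe_add, WithBot.coe_lt_coe]
      exact add_lt_add_of_lt_of_le (WithBot.coe_lt_coe.1 h) (WithBot.coe_le_coe.1 h')

theorem wb_add_lt_of_le_of_lt {a b : WithBot Γ} {d e : Γ}
    (h : a ≤ (d : WithBot Γ)) (h' : b < (e : WithBot Γ)) :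
    a + b < ((d + e : Γ) : WithBot Γ) := by
  rw [add_comm a b, add_comm d e]
  exact wb_add_lt_of_lt_of_le h' h

/-- `h` is the `w`-homogeneous degree-`d` "leading part" of `p`. -/
def Pr (w : Fin N → Γ) (d : Γ) (p h : MvPolynomial (Fin N) k) : Prop :=
  IsW w d h ∧ wdeg w (p - h) < (d : WithBot Γ)

theorem Pr.wdeg_le {d : Γ} {p h : MvPolynomial (Fin N) k} (hp : Pr w d p h) :
    wdeg w p ≤ (d : WithBot Γ) := by
  have heq : p = (p - h) + h := by ring
  calc wdeg w p = wdeg w ((p - h) + h) := by rw [← heq]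
  _ ≤ wdeg w (p - h) ⊔ wdeg w h := wdeg_add_le _ _
  _ ≤ (d : WithBot Γ) := sup_le hp.2.le hp.1.wdeg_le

theorem Pr.self {f : MvPolynomial (Fin N) k} {d : Γ} (hf : f ≠ 0)
    (hd : wdeg w f = (d : WithBot Γ)) : Pr w d f (initForm w f) :=
  ⟨IsW_initForm hd, hd ▸ wdeg_sub_initForm_lt hf⟩

theorem Pr.zero (d : Γ) : Pr w d (0 : MvPolynomial (Fin N) k) 0 :=
  ⟨fun a ha => by simp at ha, by
    rw [sub_zero]
    show wdeg w (0 : MvPolynomial (Fin N) k) < _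
    rw [wdeg_eq_bot_iff.2 rfl]
    exact bot_lt_iff_ne_bot.2 WithBot.coe_ne_bot⟩

theorem Pr.one : Pr w 0 (1 : MvPolynomial (Fin N) k) 1 := by
  constructor
  · intro a ha
    have ha0 : a = 0 := by
      have h1 : (1 : MvPolynomial (Fin N) k) = monomial 0 1 := by
        simp [monomial_eq]
      rw [h1] at ha
      simpa using Finset.mem_of_subset (support_monomial_subset) ha
    rw [ha0, mwt_zero]
  · rw [sub_self, wdeg_eq_bot_iff.2 rfl]
    exact bot_lt_iff_ne_bot.2 WithBot.coe_ne_bot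

theorem Pr.mul {d e : Γ} {p q h g : MvPolynomial (Fin N) k}
    (hp : Pr w d p h) (hq : Pr w e q g) : Pr w (d + e) (p * q) (h * g) := by
  refine ⟨hp.1.mul hq.1, ?_⟩
  have key : p * q - h * g = (p - h) * q + h * (q - g) := by ring
  rw [key]
  calc wdeg w ((p - h) * q + h * (q - g))
      ≤ wdeg w ((p - h) * q) ⊔ wdeg w (h * (q - g)) := wdeg_add_le _ _
    _ < ((d + e : Γ) : WithBot Γ) := by
        refine sup_lt_iff.2 ⟨lt_of_le_of_lt (wdeg_mul_le _ _) ?_,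
          lt_of_le_of_lt (wdeg_mul_le _ _) ?_⟩
        · exact wb_add_lt_of_lt_of_le hp.2 hq.wdeg_le
        · exact wb_add_lt_of_le_of_lt hp.1.wdeg_le hq.2

theorem Pr.pow {d : Γ} {p h : MvPolynomial (Fin N) k} (hp : Pr w d p h) (e : ℕ) :
    Pr w (e • d) (p ^ e) (h ^ e) := by
  induction e with
  | zero => simpa using Pr.one
  | succ e ih =>
    rw [pow_succ, pow_succ, succ_nsmul]
    exact ih.mul hp

theorem Pr.smulC {d : Γ} {p h : MvPolynomial (Fin N) k} (hp : Pr w d p h) (c : k) :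
    Pr w d (C c * p) (C c * h) := by
  rw [← smul_eq_C_mul, ← smul_eq_C_mul]
  constructor
  · intro a ha
    exact hp.1 a (MvPolynomial.support_smul ha)
  · rw [← smul_sub]
    exact lt_of_le_of_lt (wdeg_le_of_support_subset MvPolynomial.support_smul) hp.2

theorem Pr.add {d : Γ} {p q h g : MvPolynomial (Fin N) k}
    (hp : Pr w d p h) (hq : Pr w d q g) : Pr w d (p + q) (h + g) := by
  constructor
  · intro a ha
    rcases Finset.mem_union.1 (MvPolynomial.support_add ha) with h' | h'
    · exact hp.1 a h'
    · exact hq.1 a h'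
  · have : p + q - (h + g) = (p - h) + (q - g) := by ring
    rw [this]
    exact lt_of_le_of_lt (wdeg_add_le _ _) (sup_lt_iff.2 ⟨hp.2, hq.2⟩)

/-- Recognition: if `h ≠ 0` is the leading part of `p`, then `h = initForm w p`. -/
theorem Pr.initForm_eq {d : Γ} {p h : MvPolynomial (Fin N) k} (hp : Pr w d p h)
    (h0 : h ≠ 0) : wdeg w p = (d : WithBot Γ) ∧ initForm w p = h := by
  have hcoe : ∀ a : Fin N →₀ ℕ, mwt w a = d → coeff a p = coeff a h := by
    intro a ha
    by_contra hne
    have : a ∈ (p - h).support := by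
      rw [mem_support_iff, coeff_sub]
      exact fun hz => hne (sub_eq_zero.1 hz)
    have := le_wdeg (w := w) this
    rw [ha] at this
    exact absurd (lt_of_le_of_lt this hp.2) (lt_irrefl _)
  obtain ⟨a0, ha0⟩ := Finset.nonempty_iff_ne_empty.2
    (fun hs => h0 (support_eq_empty.1 hs))
  have ha0d : mwt w a0 = d := hp.1 a0 ha0
  have hc0 : coeff a0 p = coeff a0 h := hcoe a0 ha0d
  have hwp : wdeg w p = (d : WithBot Γ) := by
    refine le_antisymm hp.wdeg_le ?_
    have : a0 ∈ p.support := by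
      rw [mem_support_iff, hc0]
      exact mem_support_iff.1 ha0
    have := le_wdeg (w := w) this
    rwa [ha0d] at this
  refine ⟨hwp, ?_⟩
  apply MvPolynomial.ext
  intro a
  rw [coeff_initForm, hwp]
  by_cases hm : ((mwt w a : Γ) : WithBot Γ) = (d : WithBot Γ)
  · rw [if_pos hm]
    exact hcoe a (by exact_mod_cast hm)
  · rw [if_neg hm]
    by_contra hne
    have : a ∈ h.support := mem_support_iff.2 fun hz => hne hz.symm
    exact hm (by rw [hp.1 a this])

end General

section Domain

variable {k : Type*} [CommRing k] [IsDomain k] {N : ℕ} {Γ : Type*}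
  [AddCommGroup Γ] [LinearOrder Γ] [IsOrderedAddMonoid Γ] {w : Fin N → Γ}

theorem wdeg_mul {p q : MvPolynomial (Fin N) k} (hp : p ≠ 0) (hq : q ≠ 0) :
    wdeg w (p * q) = wdeg w p + wdeg w q := by
  obtain ⟨dp, hdp⟩ := exists_wdeg_eq (w := w) hp
  obtain ⟨dq, hdq⟩ := exists_wdeg_eq (w := w) hq
  have h := (Pr.self hp hdp).mul (Pr.self hq hdq)
  have h0 : initForm w p * initForm w q ≠ 0 :=
    mul_ne_zero (initForm_ne_zero hp) (initForm_ne_zero hq)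
  rw [hdp, hdq, ← WithBot.coe_add]
  exact (h.initForm_eq h0).1

end Domain

section Supported

variable {k : Type*} [CommRing k] [IsDomain k] {N : ℕ}

/-- `k[x_N]` is "factorially closed" with respect to `supported` subalgebras. -/
theorem mem_supported_of_mul_mem {s : Set (Fin N)} {p q : MvPolynomial (Fin N) k}
    (hp : p ≠ 0) (hq : q ≠ 0) (h : p * q ∈ supported k s) : p ∈ supported k s := by
  rw [mem_supported] at h ⊢
  intro i hi
  rw [Finset.mem_coe, mem_vars] at hi
  obtain ⟨a, ha, hia⟩ := hi
  by_contra his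
  -- use the weight that counts occurrences of `x i`
  set w : Fin N → ℤ := fun j => if j = i then 1 else 0 with hw
  have hmwt : ∀ b : Fin N →₀ ℕ, mwt w b = (b i : ℤ) := by
    intro b
    unfold mwt
    rw [Finsupp.sum]
    have : ∀ j ∈ b.support, (b j) • w j = if j = i then ((b j : ℤ)) else 0 := by
      intro j _
      by_cases hji : j = i <;> simp [hw, hji]
    rw [Finset.sum_congr rfl this, Finset.sum_ite_eq' b.support i fun j => ((b j : ℤ))]
    by_cases hib : i ∈ b.support
    · rw [if_pos hib]
    · rw [if_neg hib, Finsupp.notMem_support_iff.1 hib]; simp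
  have hpq : p * q ≠ 0 := mul_ne_zero hp hq
  -- wdeg w (p*q) ≤ 0 since i does not occur in p*q
  have hle : wdeg w (p * q) ≤ ((0 : ℤ) : WithBot ℤ) := by
    refine Finset.sup_le fun b hb => ?_
    have : i ∉ b.support := by
      intro hib
      exact his (h (Finset.mem_coe.2 (mem_vars i |>.2 ⟨b, hb, hib⟩)))
    rw [hmwt b, Finsupp.notMem_support_iff.1 this]
    simp
  -- but wdeg w p ≥ 1 and wdeg w q ≥ 0
  obtain ⟨dp, hdp⟩ := exists_wdeg_eq (w := w) hp
  obtain ⟨dq, hdq⟩ := exists_wdeg_eq (w := w) hq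
  have h1p : (1 : ℤ) ≤ dp := by
    have := le_wdeg (w := w) ha
    rw [hmwt, hdp, WithBot.coe_le_coe] at this
    have hai : 1 ≤ a i := by
      rcases Nat.pos_of_ne_zero (Finsupp.mem_support_iff.1 hia) with h'
      exact h'
    calc (1 : ℤ) ≤ (a i : ℤ) := by exact_mod_cast hai
    _ ≤ dp := this
  have h0q : (0 : ℤ) ≤ dq := by
    obtain ⟨b, hb⟩ := Finset.nonempty_iff_ne_empty.2
      (fun hS => hq (support_eq_empty.1 hS))
    have := le_wdeg (w := w) hb
    rw [hmwt, hdq, WithBot.coe_le_coe] at this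
    calc (0 : ℤ) ≤ (b i : ℤ) := Int.natCast_nonneg _
    _ ≤ dq := this
  have := wdeg_mul (w := w) hp hq
  rw [hdp, hdq, ← WithBot.coe_add] at this
  rw [this, WithBot.coe_le_coe] at hle
  omega

omit [IsDomain k] in
theorem initForm_mem_supported {Γ : Type*} [AddCommGroup Γ] [LinearOrder Γ] [IsOrderedAddMonoid Γ] {w : Fin N → Γ}
    {s : Set (Fin N)} {p : MvPolynomial (Fin N) k} (h : p ∈ supported k s) :
    initForm w p ∈ supported k s := by
  rw [mem_supported] at h ⊢
  intro i hi
  rw [Finset.mem_coe, mem_vars] at hi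
  obtain ⟨a, ha, hia⟩ := hi
  exact h (Finset.mem_coe.2 ((mem_vars i).2 ⟨a, support_initForm_subset p ha, hia⟩))

end Supported

section Master

variable {k : Type*} [CommRing k] {Γ : Type*} [AddCommGroup Γ] [LinearOrder Γ] [IsOrderedAddMonoid Γ]
  {n m : ℕ} (ψ : MvPolynomial (Fin n) k →ₐ[k] MvPolynomial (Fin m) k)
  (u : Fin m → Γ) (v : Fin n → Γ)

theorem Pr.sum {N : ℕ} {w : Fin N → Γ} {α : Type*} (s : Finset α) (d : Γ)
    (pf hf : α → MvPolynomial (Fin N) k) (h : ∀ x ∈ s, Pr w d (pf x) (hf x)) :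
    Pr w d (∑ x ∈ s, pf x) (∑ x ∈ s, hf x) := by
  classical
  induction s using Finset.induction with
  | empty => simpa using Pr.zero d
  | insert _ _ hx ih =>
    rename_i a t
    rw [Finset.sum_insert hx, Finset.sum_insert hx]
    exact (h a (Finset.mem_insert_self a t)).add
      (ih fun x hxt => h x (Finset.mem_insert_of_mem hxt))

theorem pr_prod (hψ : ∀ i, ψ (X i) ≠ 0) (hv : ∀ i, (v i : WithBot Γ) = wdeg u (ψ (X i)))
    (a : Fin n →₀ ℕ) :
    Pr u (mwt v a) (a.prod fun i e => (ψ (X i)) ^ e)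
      (a.prod fun i e => (initForm u (ψ (X i))) ^ e) := by
  classical
  have key : ∀ s : Finset (Fin n),
      Pr u (∑ i ∈ s, (a i) • v i) (∏ i ∈ s, (ψ (X i)) ^ (a i))
        (∏ i ∈ s, (initForm u (ψ (X i))) ^ (a i)) := by
    intro s
    induction s using Finset.induction with
    | empty => simpa using Pr.one
    | insert _ _ hx ih =>
      rename_i i t
      rw [Finset.sum_insert hx, Finset.prod_insert hx, Finset.prod_insert hx]
      exact ((Pr.self (hψ i) (hv i).symm).pow (a i)).mul ih
  have := key a.support
  rwa [show mwt v a = ∑ i ∈ a.support, (a i) • v i from rfl, Finsupp.prod, Finsupp.prod]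

theorem pr_monomial (hψ : ∀ i, ψ (X i) ≠ 0) (hv : ∀ i, (v i : WithBot Γ) = wdeg u (ψ (X i)))
    (a : Fin n →₀ ℕ) (c : k) :
    Pr u (mwt v a) (ψ (monomial a c))
      (aeval (fun i => initForm u (ψ (X i))) (monomial a c)) := by
  have h1 : ψ (monomial a c) = C c * a.prod fun i e => (ψ (X i)) ^ e := by
    rw [monomial_eq, map_mul, map_finsuppProd]
    congr 1
    · exact ψ.commutes c
    · exact Finset.prod_congr rfl fun i _ => by simp [map_pow]
  have h2 : aeval (fun i => initForm u (ψ (X i))) (monomial a c) =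
      C c * a.prod fun i e => (initForm u (ψ (X i))) ^ e := by
    rw [aeval_monomial]
    rfl
  rw [h1, h2]
  exact (pr_prod ψ u v hψ hv a).smulC c

theorem pr_master (hψ : ∀ i, ψ (X i) ≠ 0) (hv : ∀ i, (v i : WithBot Γ) = wdeg u (ψ (X i)))
    (f : MvPolynomial (Fin n) k) (d : Γ) (hd : wdeg v f = (d : WithBot Γ)) :
    Pr u d (ψ f) (aeval (fun i => initForm u (ψ (X i))) (initForm v f)) := by
  classical
  have hf : ψ f = ∑ a ∈ f.support, ψ (monomial a (coeff a f)) := by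
    conv_lhs => rw [← support_sum_monomial_coeff f]
    rw [map_sum]
  have hin : aeval (fun i => initForm u (ψ (X i))) (initForm v f) =
      ∑ a ∈ f.support, if ((mwt v a : Γ) : WithBot Γ) = wdeg v f then
        aeval (fun i => initForm u (ψ (X i))) (monomial a (coeff a f)) else 0 := by
    rw [initForm, map_sum, Finset.sum_filter]
  rw [hf, hin]
  refine Pr.sum _ _ _ _ fun a ha => ?_
  by_cases hm : ((mwt v a : Γ) : WithBot Γ) = wdeg v f
  · rw [if_pos hm]
    have hma : mwt v a = d := by rw [hd] at hm; exact_mod_cast hm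
    have := pr_monomial ψ u v hψ hv a (coeff a f)
    rwa [hma] at this
  · rw [if_neg hm]
    refine ⟨fun b hb => by simp at hb, ?_⟩
    rw [sub_zero]
    have hle : wdeg u (ψ (monomial a (coeff a f))) ≤ ((mwt v a : Γ) : WithBot Γ) :=
      (pr_monomial ψ u v hψ hv a (coeff a f)).wdeg_le
    have hlt : ((mwt v a : Γ) : WithBot Γ) < (d : WithBot Γ) := by
      rw [← hd]
      exact lt_of_le_of_ne (le_wdeg ha) hm
    exact lt_of_le_of_lt hle hlt

theorem initForm_psi [IsDomain k]
    (hψ : ∀ i, ψ (X i) ≠ 0) (hv : ∀ i, (v i : WithBot Γ) = wdeg u (ψ (X i)))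
    (hinj : Function.Injective fun f : MvPolynomial (Fin n) k =>
      aeval (fun i => initForm u (ψ (X i))) f)
    {f : MvPolynomial (Fin n) k} (hf : f ≠ 0) :
    initForm u (ψ f) = aeval (fun i => initForm u (ψ (X i))) (initForm v f) := by
  obtain ⟨d, hd⟩ := exists_wdeg_eq (w := v) hf
  have h0 : aeval (fun i => initForm u (ψ (X i))) (initForm v f) ≠ 0 := by
    intro hz
    have : initForm v f = 0 := by
      apply hinj
      simpa using hz
    exact initForm_ne_zero hf this
  exact ((pr_master ψ u v hψ hv f d hd).initForm_eq h0).2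

end Master

section TransDeg

variable {k : Type*} [CommRing k] [Nontrivial k] {n : ℕ}

omit [Nontrivial k] in
theorem le_totalDegree' {p : MvPolynomial (Fin n) k} {b : Fin n →₀ ℕ}
    (hb : b ∈ p.support) (i : Fin n) : b i ≤ p.totalDegree := by
  refine le_trans ?_ (MvPolynomial.le_totalDegree hb)
  by_cases hib : i ∈ b.support
  · exact Finset.single_le_sum (fun j _ => Nat.zero_le _) hib
  · rw [Finsupp.notMem_support_iff.1 hib]; exact Nat.zero_le _

/-- Any `n+1` elements of a polynomial ring in `n` variables over a domain are
algebraically dependent. -/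
theorem not_algebraicIndependent (y : Fin (n + 1) → MvPolynomial (Fin n) k) :
    ¬ AlgebraicIndependent k y := by
  classical
  intro hind
  have hinj : Function.Injective (aeval y : MvPolynomial (Fin (n + 1)) k →ₐ[k] _) :=
    algebraicIndependent_iff_injective_aeval.1 hind
  set D : ℕ := (Finset.univ.sup fun i => (y i).totalDegree) + 1 with hD
  have hD1 : 1 ≤ D := Nat.le_add_left 1 _
  have hyD : ∀ i, (y i).totalDegree ≤ D := by
    intro i
    have h1 : (y i).totalDegree ≤ Finset.univ.sup fun j => (y j).totalDegree :=
      Finset.le_sup (f := fun j => (y j).totalDegree) (Finset.mem_univ i)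
    omega
  set base : ℕ := (n + 1) * D + 1 with hbase
  have hbase2 : 2 ≤ base := by
    have : 1 ≤ (n + 1) * D := Nat.one_le_iff_ne_zero.2 (by positivity)
    omega
  set t : ℕ := base ^ (n + 1) with ht
  have ht1 : 1 ≤ t := Nat.one_le_iff_ne_zero.2 (by positivity)
  set M : ℕ := (n + 1) * t * D with hM
  -- the embedding of exponent functions
  set e : (Fin (n + 1) → Fin t) → (Fin (n + 1) →₀ ℕ) :=
    fun g => Finsupp.equivFunOnFinite.symm fun i => (g i : ℕ) with he
  have einj : Function.Injective e := by
    intro g g' hgg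
    funext i
    have := congrArg (fun b : Fin (n + 1) →₀ ℕ => b i) hgg
    simp only [he, Finsupp.coe_equivFunOnFinite_symm] at this
    exact Fin.val_injective this
  -- linearly independent family
  have li0 : LinearIndependent k fun b : Fin (n + 1) →₀ ℕ =>
      (monomial b (1 : k) : MvPolynomial (Fin (n + 1)) k) := by
    have := (MvPolynomial.basisMonomials (Fin (n + 1)) k).linearIndependent
    rwa [coe_basisMonomials] at this
  have li1 := li0.comp e einj
  have hker : LinearMap.ker (aeval y : MvPolynomial (Fin (n + 1)) k →ₐ[k] _).toLinearMap
      = ⊥ := LinearMap.ker_eq_bot.2 hinj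
  set v : (Fin (n + 1) → Fin t) → MvPolynomial (Fin n) k :=
    ⇑(aeval y : MvPolynomial (Fin (n + 1)) k →ₐ[k] _).toLinearMap ∘
      (fun b : Fin (n + 1) →₀ ℕ => (monomial b (1 : k) : MvPolynomial (Fin (n + 1)) k)) ∘ e
    with hv
  have hli : LinearIndependent k v := li1.map' _ hker
  have hvg : ∀ g, v g = aeval y (monomial (e g) (1 : k)) := by
    intro g
    simp only [hv, Function.comp_apply, AlgHom.toLinearMap_apply]
  -- spanning set
  set B : Finset (Fin n →₀ ℕ) := Finset.image
    (fun g : Fin n → Fin (M + 1) => Finsupp.equivFunOnFinite.symm fun i => (g i : ℕ))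
    Finset.univ with hB
  set W : Finset (MvPolynomial (Fin n) k) :=
    B.image (fun b => monomial b (1 : k)) with hW
  have hspan : Set.range v ≤ Submodule.span k (W : Set (MvPolynomial (Fin n) k)) := by
    rintro _ ⟨g, rfl⟩
    change v g ∈ _
    -- totalDegree bound
    have hdeg : (v g).totalDegree ≤ M := by
      have h1 : v g = (e g).prod fun i ex => (y i) ^ ex := by
        rw [hvg g, aeval_monomial]
        simp
      rw [h1, Finsupp.prod]
      refine le_trans (totalDegree_finset_prod _ _) ?_
      have hbound : ∀ i ∈ (e g).support, ((y i) ^ ((e g) i)).totalDegree ≤ t * D := by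
        intro i _
        refine le_trans (totalDegree_pow _ _) ?_
        have h2 : (e g) i ≤ t := by
          have : (e g) i = (g i : ℕ) := by
            simp [he]
          rw [this]; exact le_of_lt (g i).isLt
        exact Nat.mul_le_mul h2 (hyD i)
      refine le_trans (Finset.sum_le_card_nsmul _ _ (t * D) hbound) ?_
      rw [smul_eq_mul, hM]
      have : (e g).support.card ≤ n + 1 := by
        refine le_trans (Finset.card_le_card (Finset.subset_univ _)) ?_
        simp
      calc (e g).support.card * (t * D) ≤ (n + 1) * (t * D) :=
            Nat.mul_le_mul_right _ this
        _ = (n + 1) * t * D := by ring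
    -- membership in span
    have hsum : (∑ b ∈ (v g).support, monomial b (coeff b (v g)))
        ∈ Submodule.span k (W : Set (MvPolynomial (Fin n) k)) := by
      refine Submodule.sum_mem _ fun b hb => ?_
      have hbM : ∀ i, b i ≤ M := fun i => le_trans (le_totalDegree' hb i) hdeg
      have hmono : monomial b (1 : k) ∈ W := by
        rw [hW, Finset.mem_image]
        refine ⟨b, ?_, rfl⟩
        rw [hB, Finset.mem_image]
        refine ⟨fun i => ⟨b i, Nat.lt_succ_of_le (hbM i)⟩, Finset.mem_univ _, ?_⟩
        ext i
        simp
      have hsm : monomial b (coeff b (v g)) = (coeff b (v g)) • monomial b (1 : k) := by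
        rw [smul_monomial, smul_eq_mul, mul_one]
      rw [hsm]
      exact Submodule.smul_mem _ _ (Submodule.subset_span hmono)
    rw [support_sum_monomial_coeff (v g)] at hsum
    exact hsum
  -- cardinality contradiction
  have hcard := linearIndependent_le_span_aux' v hli (W : Set (MvPolynomial (Fin n) k))
    hspan
  have hcard1 : Fintype.card (Fin (n + 1) → Fin t) = t ^ (n + 1) := by
    simp [Fintype.card_fun]
  have hcard2 : Fintype.card (W : Set (MvPolynomial (Fin n) k)) ≤ (M + 1) ^ n := by
    have h5 : W.card ≤ (M + 1) ^ n := by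
      refine le_trans (Finset.card_image_le) (le_trans (Finset.card_image_le) ?_)
      rw [Finset.card_univ]
      simp [Fintype.card_fun]
    simpa only [Finset.coe_sort_coe, Fintype.card_coe] using h5
  rw [hcard1] at hcard
  have hfinal : t ^ (n + 1) ≤ (M + 1) ^ n := le_trans hcard hcard2
  -- numeric contradiction
  have hM1 : M + 1 ≤ base * t := by
    have : M + 1 = (n + 1) * D * t + 1 := by rw [hM]; ring_nf
    rw [this, hbase]
    calc (n + 1) * D * t + 1 ≤ (n + 1) * D * t + t := by omega
      _ = ((n + 1) * D + 1) * t := by ring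
  have h3 : (M + 1) ^ n ≤ base ^ n * t ^ n := by
    calc (M + 1) ^ n ≤ (base * t) ^ n := Nat.pow_le_pow_left hM1 n
      _ = base ^ n * t ^ n := mul_pow _ _ _
  have h4 : base ^ n * t ^ n < t ^ (n + 1) := by
    have hbt : base ^ n < t := by
      rw [ht]
      exact Nat.pow_lt_pow_succ (by omega)
    calc base ^ n * t ^ n < t * t ^ n :=
          Nat.mul_lt_mul_of_lt_of_le hbt le_rfl (by positivity)
      _ = t ^ (n + 1) := by ring
  omega

end TransDeg

section FinSucc

variable {k : Type*} [CommRing k] {n : ℕ}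

theorem finSuccEquiv_map_coeff {S : Type*} [CommRing S] (f : k →+* S)
    (Q : MvPolynomial (Fin (n + 1)) k) (j : ℕ) :
    (finSuccEquiv S n (MvPolynomial.map f Q)).coeff j =
      MvPolynomial.map f ((finSuccEquiv k n Q).coeff j) := by
  apply MvPolynomial.ext
  intro a
  rw [finSuccEquiv_coeff_coeff, coeff_map, coeff_map, finSuccEquiv_coeff_coeff]

theorem aeval_cons_eq (p : MvPolynomial (Fin n) k) (y : Fin n → MvPolynomial (Fin n) k)
    (Q : MvPolynomial (Fin (n + 1)) k) :
    aeval (Fin.cons p y : Fin (n + 1) → MvPolynomial (Fin n) k) Q =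
      Polynomial.eval p (Polynomial.map
        (aeval y : MvPolynomial (Fin n) k →ₐ[k] MvPolynomial (Fin n) k).toRingHom
        (finSuccEquiv k n Q)) := by
  have h1 : aeval (Fin.cons p y : Fin (n + 1) → MvPolynomial (Fin n) k) Q =
      eval (Fin.cons p y : Fin (n + 1) → MvPolynomial (Fin n) k)
        (MvPolynomial.map (algebraMap k (MvPolynomial (Fin n) k)) Q) := by
    rw [aeval_def, ← eval_map]
  rw [h1, eval_eq_eval_mv_eval']
  congr 1
  apply Polynomial.ext
  intro j
  rw [Polynomial.coeff_map, Polynomial.coeff_map, finSuccEquiv_map_coeff]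
  rw [eval_map, ← aeval_def]
  rfl

theorem exists_dvd_coeff {A : Type*} [CommRing A] [IsDomain A] {p : A} (hp : p ≠ 0) :
    ∀ (N : ℕ) (q : Polynomial A), q.natDegree ≤ N → q ≠ 0 → Polynomial.eval p q = 0 →
      ∃ j, q.coeff j ≠ 0 ∧ p ∣ q.coeff j := by
  intro N
  induction N with
  | zero =>
    intro q hdeg hq0 hev
    exfalso
    have hC : q = Polynomial.C (q.coeff 0) :=
      Polynomial.eq_C_of_natDegree_eq_zero (Nat.le_zero.1 hdeg)
    rw [hC, Polynomial.eval_C] at hev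
    exact hq0 (by rw [hC, hev, map_zero])
  | succ N ih =>
    intro q hdeg hq0 hev
    by_cases h0 : q.coeff 0 = 0
    · -- q = divX q * X
      have hqx : q = q.divX * Polynomial.X := by
        conv_lhs => rw [← Polynomial.divX_mul_X_add q]
        rw [h0, map_zero, add_zero]
      have hdx0 : q.divX ≠ 0 := fun h => hq0 (by rw [hqx, h, zero_mul])
      have hevx : Polynomial.eval p q.divX = 0 := by
        rw [hqx, Polynomial.eval_mul, Polynomial.eval_X] at hev
        rcases mul_eq_zero.1 hev with h | h
        · exact h
        · exact absurd h hp
      have hdegx : q.divX.natDegree ≤ N := by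
        rw [Polynomial.natDegree_divX_eq_natDegree_tsub_one]
        omega
      obtain ⟨j, hj0, hjd⟩ := ih q.divX hdegx hdx0 hevx
      exact ⟨j + 1, by rwa [← Polynomial.coeff_divX], by rwa [← Polynomial.coeff_divX]⟩
    · refine ⟨0, h0, ?_⟩
      have := Polynomial.divX_mul_X_add q
      have hev2 : Polynomial.eval p q.divX * p + q.coeff 0 = 0 := by
        rw [← hev]
        conv_rhs => rw [← this]
        rw [Polynomial.eval_add, Polynomial.eval_mul, Polynomial.eval_X, Polynomial.eval_C]
      refine ⟨-(Polynomial.eval p q.divX), ?_⟩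
      have : q.coeff 0 = -(Polynomial.eval p q.divX * p) := by linear_combination hev2
      rw [this]
      ring

end FinSucc

/-- If `ψ^u` is injective and `ψ^u(k[x_1,…,x_n]) ⊄ k[x_1,…,x_l]`, then for any
`S ⊂ k[x_1,…,x_n]∖{0}` with `trdeg_k k[S] = n` there is `g ∈ S` dividing no
initial form `f^{u_ψ}` with `f ∈ ψ⁻¹(k[x_1,…,x_l])` nonzero. -/
theorem exists_not_dvd_initForm {k Γ : Type*} [CommRing k] [IsDomain k]
    [AddCommGroup Γ] [LinearOrder Γ] [IsOrderedAddMonoid Γ] {n m l : ℕ} (hnm : n ≤ m) (hl1 : 1 ≤ l) (hlm : l ≤ m)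
    (ψ : MvPolynomial (Fin n) k →ₐ[k] MvPolynomial (Fin m) k)
    (hψ : ∀ i, ψ (X i) ≠ 0) (u : Fin m → Γ) (uψ : Fin n → Γ)
    (huψ : ∀ i, (uψ i : WithBot Γ) = wdeg u (ψ (X i)))
    (hinj : Function.Injective fun f : MvPolynomial (Fin n) k =>
      aeval (fun i => initForm u (ψ (X i))) f)
    (hnc : ¬ ∀ f : MvPolynomial (Fin n) k,
      aeval (fun i => initForm u (ψ (X i))) f ∈ supported k {i : Fin m | (i : ℕ) < l})
    (S : Set (MvPolynomial (Fin n) k)) (hS0 : (0 : MvPolynomial (Fin n) k) ∉ S)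
    (hStrdeg : ∃ y : Fin n → MvPolynomial (Fin n) k,
      (∀ i, y i ∈ S) ∧ AlgebraicIndependent k y) :
    ∃ g ∈ S, ∀ f : MvPolynomial (Fin n) k, f ≠ 0 →
      ψ f ∈ supported k {i : Fin m | (i : ℕ) < l} → ¬ g ∣ initForm uψ f := by
  classical
  obtain ⟨y, hyS, hyind⟩ := hStrdeg
  by_contra hcon
  push_neg at hcon
  set sl : Set (Fin m) := {i : Fin m | (i : ℕ) < l} with hsl
  set φu : MvPolynomial (Fin n) k →ₐ[k] MvPolynomial (Fin m) k :=
    aeval (fun i => initForm u (ψ (X i))) with hφu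
  have hφu_inj : Function.Injective φu := hinj
  have hφu_ne : ∀ {h : MvPolynomial (Fin n) k}, h ≠ 0 → φu h ≠ 0 := by
    intro h hh hz
    exact hh (hφu_inj (by rw [hz, map_zero]))
  -- Step 1: every y i lands in the supported subalgebra under φu
  have hyA : ∀ i, φu (y i) ∈ supported k sl := by
    intro i
    obtain ⟨f, hf0, hfs, hdvd⟩ := hcon (y i) (hyS i)
    obtain ⟨q, hq⟩ := hdvd
    have hy0 : y i ≠ 0 := fun h => hS0 (h ▸ hyS i)
    have hif0 : initForm uψ f ≠ 0 := initForm_ne_zero hf0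
    have hq0 : q ≠ 0 := fun h => hif0 (by rw [hq, h, mul_zero])
    have hsupp : φu (initForm uψ f) ∈ supported k sl := by
      rw [hφu, ← initForm_psi ψ u uψ hψ huψ hinj hf0]
      exact initForm_mem_supported hfs
    rw [hq, map_mul] at hsupp
    exact mem_supported_of_mul_mem (hφu_ne hy0) (hφu_ne hq0) hsupp
  -- the subalgebra pulled back along φu
  set T : Subalgebra k (MvPolynomial (Fin n) k) := (supported k sl).comap φu with hT
  have hadj : Algebra.adjoin k (Set.range y) ≤ T := by
    refine Algebra.adjoin_le ?_
    rintro _ ⟨i, rfl⟩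
    exact hyA i
  have hyinj : Function.Injective (aeval y : MvPolynomial (Fin n) k →ₐ[k] _) :=
    algebraicIndependent_iff_injective_aeval.1 hyind
  -- Step 2: every polynomial lands in the supported subalgebra under φu
  have hall : ∀ f : MvPolynomial (Fin n) k,
      aeval (fun i => initForm u (ψ (X i))) f ∈ supported k sl := by
    intro p
    by_cases hp0 : p = 0
    · rw [hp0, map_zero]
      exact Subalgebra.zero_mem _
    have hdep := not_algebraicIndependent (Fin.cons p y)
    rw [algebraicIndependent_iff] at hdep
    push_neg at hdep
    obtain ⟨Q, hQ0, hQne⟩ := hdep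
    set Qp : Polynomial (MvPolynomial (Fin n) k) :=
      Polynomial.map (aeval y : MvPolynomial (Fin n) k →ₐ[k] _).toRingHom
        (finSuccEquiv k n Q) with hQp
    have hQp0 : Qp ≠ 0 := by
      rw [hQp]
      intro h
      apply hQne
      have h2 : finSuccEquiv k n Q = 0 :=
        (Polynomial.map_eq_zero_iff hyinj).1 h
      exact (EmbeddingLike.map_eq_zero_iff).1 h2
    have hev : Polynomial.eval p Qp = 0 := by
      rw [hQp, ← aeval_cons_eq]
      exact hQ0
    obtain ⟨j, hj0, c, hc⟩ :=
      exists_dvd_coeff hp0 Qp.natDegree Qp le_rfl hQp0 hev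
    have hjT : Qp.coeff j ∈ T := by
      rw [hQp, Polynomial.coeff_map]
      have : (aeval y : MvPolynomial (Fin n) k →ₐ[k] _) ((finSuccEquiv k n Q).coeff j) ∈
          Algebra.adjoin k (Set.range y) := by
        rw [Algebra.adjoin_range_eq_range_aeval]
        exact ⟨(finSuccEquiv k n Q).coeff j, rfl⟩
      exact hadj this
    have hc0 : c ≠ 0 := fun h => hj0 (by rw [hc, h, mul_zero])
    have hpc : φu (p * c) ∈ supported k sl := by
      rw [← hc]
      exact hjT
    rw [map_mul] at hpc
    exact mem_supported_of_mul_mem (hφu_ne hp0) (hφu_ne hc0) hpc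
  exact hnc hall
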